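/- For every nonnegative integers m, n, ℓ with n ≥ m and every real t with 0 ≤ t ≤ 1, one has P_ℓ^{(n,m)}(2t² − 1) = (2·(−1)^ℓ·(m+ℓ)!)/(√π·ℓ!·Γ(m+1/2)) · ∫_0^1 (1 − v²)^{m − 1/2} · ₂F₁(−ℓ, ℓ+n+m+1; 1/2; t²v²) dv. -/

import Mathlib

open Real MeasureTheory

/-- Generalized binomial coefficient `C(a, j) = a(a-1)⋯(a-j+1)/j!`. -/
noncomputable def genBinom (a : ℝ) (j : ℕ) : ℝ :=
  (∏ i ∈ Finset.range j, (a - i)) / (Nat.factorial j)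

/-- Jacobi polynomial `P_ℓ^{(α,β)}(x)`. -/
noncomputable def jacobiP (α β : ℝ) (l : ℕ) (x : ℝ) : ℝ :=
  ∑ k ∈ Finset.range (l + 1),
    genBinom ((l : ℝ) + α) (l - k) * genBinom ((l : ℝ) + β) k *
      ((x - 1) / 2) ^ k * ((x + 1) / 2) ^ (l - k)

/-- Gegenbauer (ultraspherical) polynomial `C_m^{(λ)}(x)`. -/
noncomputable def gegenbauerC (m : ℕ) (lam : ℝ) (x : ℝ) : ℝ :=
  ∑ k ∈ Finset.range (m / 2 + 1),
    (-1 : ℝ) ^ k *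
      (Real.Gamma (lam + m - k) /
        (Real.Gamma lam * (Nat.factorial k) * (Nat.factorial (m - 2 * k)))) *
      (2 * x) ^ (m - 2 * k)

/-- Pochhammer symbol `(q)_k = q(q+1)⋯(q+k-1)`. -/
noncomputable def poch (q : ℝ) (k : ℕ) : ℝ := ∏ i ∈ Finset.range k, (q + i)

/-- Terminating Gauss hypergeometric function `₂F₁(-m, b; c; z)`. -/
noncomputable def hyp2F1 (m : ℕ) (b c z : ℝ) : ℝ :=
  ∑ k ∈ Finset.range (m + 1),
    poch (-(m : ℝ)) k * poch b k / (poch c k * (Nat.factorial k)) * z ^ k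

/-- The operator `(Df)(u) = -(1/sin u) f'(u)`. -/
noncomputable def Dop (f : ℝ → ℝ) : ℝ → ℝ := fun u => -(1 / Real.sin u) * deriv f u

/-! ### Auxiliary lemmas -/

lemma prod_desc (N j : ℕ) : (∏ i ∈ Finset.range j, ((N : ℝ) - i)) = (N.descFactorial j : ℝ) := by
  induction j with
  | zero => simp
  | succ j ih =>
    rw [Finset.prod_range_succ, ih, Nat.descFactorial_succ]
    by_cases h : j ≤ N
    · push_cast [h]; ring
    · rw [Nat.descFactorial_eq_zero_iff_lt.2 (by omega)]
      simp

lemma genBinom_nat (N j : ℕ) : genBinom (N : ℝ) j = (N.choose j : ℝ) := by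
  rw [genBinom, prod_desc, Nat.descFactorial_eq_factorial_mul_choose]
  push_cast
  rw [mul_comm, mul_div_assoc, div_self (by positivity), mul_one]

lemma poch_zero (q : ℝ) : poch q 0 = 1 := by simp [poch]
lemma poch_succ (q : ℝ) (k : ℕ) : poch q (k + 1) = poch q k * (q + k) := Finset.prod_range_succ _ _

lemma poch_neg_nat (l k : ℕ) : poch (-(l : ℝ)) k = (-1 : ℝ) ^ k * (l.descFactorial k : ℝ) := by
  rw [poch, ← prod_desc]
  have : ∀ i ∈ Finset.range k, (-(l:ℝ) + i) = (-1) * ((l:ℝ) - i) := fun i _ => by ring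
  rw [Finset.prod_congr rfl this, Finset.prod_mul_distrib, Finset.prod_const, Finset.card_range]

lemma poch_nat_factorial (a k : ℕ) : poch ((a : ℝ) + 1) k * (a.factorial : ℝ) = ((a + k).factorial : ℝ) := by
  induction k with
  | zero => simp [poch_zero]
  | succ k ih =>
    rw [poch_succ]
    have : ((a + (k+1)).factorial : ℝ) = ((a : ℝ) + 1 + k) * ((a+k).factorial : ℝ) := by
      have : a + (k+1) = (a + k) + 1 := by ring
      rw [this, Nat.factorial_succ]; push_cast; ring
    rw [this, ← ih]; ring

lemma poch_half_pos (k : ℕ) : 0 < poch (1/2 : ℝ) k :=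
  Finset.prod_pos fun i _ => by positivity

lemma Gamma_half_poch (k : ℕ) : Real.Gamma ((k : ℝ) + 1/2) = poch (1/2 : ℝ) k * Real.sqrt π := by
  induction k with
  | zero =>
    simp only [Nat.cast_zero, zero_add, poch_zero, one_mul]
    exact Real.Gamma_one_half_eq
  | succ k ih =>
    have h : ((k : ℝ) + 1) + 1/2 = ((k : ℝ) + 1/2) + 1 := by ring
    push_cast
    rw [h, Real.Gamma_add_one (by positivity), ih, poch_succ]
    ring

/-! ### The real Beta integral -/

lemma cplx_eq_real (p q : ℝ) : Set.EqOn (fun x : ℝ => (x : ℂ) ^ ((p : ℂ) - 1) * (1 - (x : ℂ)) ^ ((q : ℂ) - 1))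
    (fun x : ℝ => ((x ^ (p - 1) * (1 - x) ^ (q - 1) : ℝ) : ℂ)) (Set.Icc 0 1) := by
  intro x hx
  simp only []
  rw [Complex.ofReal_mul, Complex.ofReal_cpow hx.1, Complex.ofReal_cpow (by linarith [hx.2] : (0:ℝ) ≤ 1 - x)]
  push_cast
  ring

lemma realBetaIntegrable (p q : ℝ) (hp : 0 < p) (hq : 0 < q) :
    IntervalIntegrable (fun x : ℝ => x ^ (p - 1) * (1 - x) ^ (q - 1)) volume 0 1 := by
  have h := Complex.betaIntegral_convergent (u := (p : ℂ)) (v := (q : ℂ)) (by simpa) (by simpa)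
  rw [intervalIntegrable_iff_integrableOn_Ioc_of_le zero_le_one] at h ⊢
  have h2 : IntegrableOn (fun (x : ℝ) => Complex.re ((x:ℂ) ^ ((p:ℂ) - 1) * (1 - (x:ℂ)) ^ ((q:ℂ) - 1))) (Set.Ioc (0:ℝ) 1) volume := h.re
  refine IntegrableOn.congr_fun h2 ?_ measurableSet_Ioc
  intro x hx
  have := cplx_eq_real p q (Set.mem_Icc.2 ⟨le_of_lt hx.1, hx.2⟩)
  simp only at this
  simp [this]

lemma realBeta (p q : ℝ) (hp : 0 < p) (hq : 0 < q) :
    Real.Gamma p * Real.Gamma q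
      = Real.Gamma (p + q) * ∫ x in (0:ℝ)..1, x ^ (p - 1) * (1 - x) ^ (q - 1) := by
  have h := Complex.Gamma_mul_Gamma_eq_betaIntegral (s := (p : ℂ)) (t := (q : ℂ)) (by simpa) (by simpa)
  have hbeta : Complex.betaIntegral (p : ℂ) (q : ℂ)
      = ((∫ x in (0:ℝ)..1, x ^ (p - 1) * (1 - x) ^ (q - 1) : ℝ) : ℂ) := by
    rw [Complex.betaIntegral]
    rw [intervalIntegral.integral_congr (g := fun x : ℝ => ((x ^ (p - 1) * (1 - x) ^ (q - 1) : ℝ) : ℂ))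
      (by rw [Set.uIcc_of_le zero_le_one]; exact cplx_eq_real p q)]
    exact intervalIntegral.integral_ofReal
  rw [hbeta, show ((p:ℂ) + (q:ℂ)) = ((p + q : ℝ) : ℂ) by push_cast; ring] at h
  rw [Complex.Gamma_ofReal, Complex.Gamma_ofReal, Complex.Gamma_ofReal] at h
  exact_mod_cast h

/-! ### Substitution `u = v²` -/

lemma sq_image_Ioo : (fun v : ℝ => v ^ 2) '' Set.Ioo 0 1 = Set.Ioo (0:ℝ) 1 := by
  ext u
  constructor
  · rintro ⟨v, hv, rfl⟩
    simp only [Set.mem_Ioo]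
    constructor <;> nlinarith [hv.1, hv.2]
  · intro hu
    exact ⟨Real.sqrt u, ⟨Real.sqrt_pos.2 hu.1, by
      rw [show (1:ℝ) = Real.sqrt 1 by simp]; exact Real.sqrt_lt_sqrt (le_of_lt hu.1) hu.2⟩,
      Real.sq_sqrt (le_of_lt hu.1)⟩

lemma sq_deriv : ∀ v ∈ Set.Ioo (0:ℝ) 1, HasDerivWithinAt (fun v : ℝ => v ^ 2) (2 * v) (Set.Ioo 0 1) v := by
  intro v _
  simpa using (hasDerivAt_pow 2 v).hasDerivWithinAt

lemma sq_injOn : Set.InjOn (fun v : ℝ => v ^ 2) (Set.Ioo 0 1) := by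
  intro a ha b hb hab
  simp only at hab
  nlinarith [ha.1, hb.1]

lemma subst_eqOn (k m : ℕ) : ∀ v ∈ Set.Ioo (0:ℝ) 1,
    |2 * v| • ((v ^ 2) ^ (((k:ℝ) + 1/2) - 1) * (1 - v ^ 2) ^ (((m:ℝ) + 1/2) - 1))
      = 2 * ((1 - v ^ 2) ^ ((m:ℝ) - 1/2) * v ^ (2 * k)) := by
  intro v hv
  have hv0 : (0:ℝ) < v := hv.1
  have h2 : (v ^ 2) ^ (((k:ℝ) + 1/2) - 1) = v ^ ((2 * (k:ℝ)) - 1) := by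
    rw [← Real.rpow_natCast v 2, ← Real.rpow_mul (le_of_lt hv0)]
    congr 1; push_cast; ring
  have h3 : v ^ ((2 * (k:ℝ)) - 1) = v ^ (2 * k : ℕ) / v := by
    rw [Real.rpow_sub hv0, Real.rpow_one]
    congr 1
    rw [← Real.rpow_natCast v (2 * k)]
    congr 1; push_cast; ring
  rw [h2, h3, abs_of_pos (by linarith), smul_eq_mul]
  have : (((m:ℝ) + 1/2) - 1) = (m:ℝ) - 1/2 := by ring
  rw [this]
  field_simp

lemma Ibeta_core (k m : ℕ) :
    (∫ u in Set.Ioo (0:ℝ) 1, u ^ (((k:ℝ) + 1/2) - 1) * (1 - u) ^ (((m:ℝ) + 1/2) - 1))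
      = ∫ v in Set.Ioo (0:ℝ) 1, 2 * ((1 - v ^ 2) ^ ((m:ℝ) - 1/2) * v ^ (2 * k)) := by
  have h := integral_image_eq_integral_abs_deriv_smul measurableSet_Ioo (sq_deriv)
    (sq_injOn) (fun u => u ^ (((k:ℝ) + 1/2) - 1) * (1 - u) ^ (((m:ℝ) + 1/2) - 1))
  rw [sq_image_Ioo] at h
  rw [h]
  exact setIntegral_congr_fun measurableSet_Ioo (subst_eqOn k m)

lemma Ibeta_integrableOn (k m : ℕ) :
    IntegrableOn (fun v : ℝ => (1 - v ^ 2) ^ ((m:ℝ) - 1/2) * v ^ (2 * k)) (Set.Ioo 0 1) volume := by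
  have h0 := realBetaIntegrable ((k:ℝ) + 1/2) ((m:ℝ) + 1/2) (by positivity) (by positivity)
  rw [intervalIntegrable_iff_integrableOn_Ioc_of_le zero_le_one] at h0
  have h1 : IntegrableOn (fun u : ℝ => u ^ (((k:ℝ) + 1/2) - 1) * (1 - u) ^ (((m:ℝ) + 1/2) - 1)) (Set.Ioo 0 1) volume :=
    h0.mono_set Set.Ioo_subset_Ioc_self
  have h2 := (integrableOn_image_iff_integrableOn_abs_deriv_smul measurableSet_Ioo (sq_deriv)
    (sq_injOn) (fun u => u ^ (((k:ℝ) + 1/2) - 1) * (1 - u) ^ (((m:ℝ) + 1/2) - 1)))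
  rw [sq_image_Ioo] at h2
  have h3 := h2.1 h1
  have h4 : IntegrableOn (fun v : ℝ => 2 * ((1 - v ^ 2) ^ ((m:ℝ) - 1/2) * v ^ (2 * k))) (Set.Ioo 0 1) volume :=
    h3.congr_fun (subst_eqOn k m) measurableSet_Ioo
  have h5 : IntegrableOn (fun v : ℝ => (1/2 : ℝ) * (2 * ((1 - v ^ 2) ^ ((m:ℝ) - 1/2) * v ^ (2 * k)))) (Set.Ioo 0 1) volume := h4.const_mul (1/2 : ℝ)
  refine IntegrableOn.congr_fun h5 (fun v _ => by ring) measurableSet_Ioo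

lemma Ibeta_intervalIntegrable (k m : ℕ) :
    IntervalIntegrable (fun v : ℝ => (1 - v ^ 2) ^ ((m:ℝ) - 1/2) * v ^ (2 * k)) volume 0 1 := by
  rw [intervalIntegrable_iff_integrableOn_Ioc_of_le zero_le_one]
  exact (Ibeta_integrableOn k m).congr_set_ae Ioo_ae_eq_Ioc.symm

lemma Ibeta (k m : ℕ) :
    (∫ v in (0:ℝ)..1, (1 - v ^ 2) ^ ((m:ℝ) - 1/2) * v ^ (2 * k))
      = Real.Gamma ((k:ℝ) + 1/2) * Real.Gamma ((m:ℝ) + 1/2) / (2 * ((k + m).factorial : ℝ)) := by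
  have hbeta := realBeta ((k:ℝ) + 1/2) ((m:ℝ) + 1/2) (by positivity) (by positivity)
  have hsum : ((k:ℝ) + 1/2) + ((m:ℝ) + 1/2) = ((k + m : ℕ) : ℝ) + 1 := by push_cast; ring
  rw [hsum, Real.Gamma_nat_eq_factorial] at hbeta
  have hI : (∫ x in (0:ℝ)..1, x ^ (((k:ℝ) + 1/2) - 1) * (1 - x) ^ (((m:ℝ) + 1/2) - 1))
      = 2 * ∫ v in (0:ℝ)..1, (1 - v ^ 2) ^ ((m:ℝ) - 1/2) * v ^ (2 * k) := by
    rw [intervalIntegral.integral_of_le zero_le_one, intervalIntegral.integral_of_le zero_le_one,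
      integral_Ioc_eq_integral_Ioo, integral_Ioc_eq_integral_Ioo, Ibeta_core k m,
      integral_const_mul]
  rw [hI] at hbeta
  have hfac : ((k + m).factorial : ℝ) ≠ 0 := by positivity
  field_simp at hbeta ⊢
  linarith [hbeta]

/-! ### Combinatorial identity -/

lemma vandermonde_real (a b j : ℕ) :
    ∑ r ∈ Finset.range (j+1), ((a.choose r : ℝ) * (b.choose (j - r) : ℝ))
      = ((a + b).choose j : ℝ) := by
  rw [Nat.add_choose_eq, Finset.Nat.sum_antidiagonal_eq_sum_range_succ_mk]
  push_cast
  rfl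

lemma lemA (n m l : ℕ) (z : ℝ) :
    ∑ k ∈ Finset.range (l+1), ((l+n).choose (l-k) : ℝ) * ((l+m).choose k : ℝ) * (z-1)^k * z^(l-k)
      = ∑ j ∈ Finset.range (l+1),
          (-1:ℝ)^(l-j) * ((l+m).choose (l-j) : ℝ) * ((l+n+m+j).choose j : ℝ) * z^j := by
  have step1 : ∀ k ∈ Finset.range (l+1),
      ((l+n).choose (l-k) : ℝ) * ((l+m).choose k : ℝ) * (z-1)^k * z^(l-k)
        = ∑ i ∈ Finset.range (k+1),
            ((l+n).choose (l-k) : ℝ) * ((l+m).choose k : ℝ) * ((-1:ℝ)^(i+k) * z^i * (k.choose i : ℝ)) * z^(l-k) := by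
    intro k _
    rw [sub_pow z 1 k]
    rw [Finset.mul_sum, Finset.sum_mul]
    refine Finset.sum_congr rfl fun i _ => ?_
    ring
  rw [Finset.sum_congr rfl step1]
  rw [Finset.sum_sigma']
  have step2 : ∑ a ∈ (Finset.range (l+1)).sigma (fun k => Finset.range (k+1)),
      ((l+n).choose (l-a.1) : ℝ) * ((l+m).choose a.1 : ℝ) * ((-1:ℝ)^(a.2+a.1) * z^a.2 * (a.1.choose a.2 : ℝ)) * z^(l-a.1)
      = ∑ b ∈ (Finset.range (l+1)).sigma (fun j => Finset.range (j+1)),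
          (-1:ℝ)^(l-b.1) * ((l+m).choose (l-b.1) : ℝ) * (((l+n).choose b.2 : ℝ) * ((m+b.1).choose (b.1-b.2) : ℝ)) * z^b.1 := by
    refine Finset.sum_nbij' (fun a => ⟨l - a.1 + a.2, l - a.1⟩) (fun b => ⟨l - b.2, b.1 - b.2⟩)
      ?_ ?_ ?_ ?_ ?_
    · rintro ⟨k, i⟩ ha
      simp only [Finset.mem_sigma, Finset.mem_range] at ha ⊢
      omega
    · rintro ⟨j, r⟩ hb
      simp only [Finset.mem_sigma, Finset.mem_range] at hb ⊢
      omega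
    · rintro ⟨k, i⟩ ha
      simp only [Finset.mem_sigma, Finset.mem_range] at ha
      exact Sigma.ext (by simp only; omega) (heq_of_eq (by simp only; omega))
    · rintro ⟨j, r⟩ hb
      simp only [Finset.mem_sigma, Finset.mem_range] at hb
      exact Sigma.ext (by simp only; omega) (heq_of_eq (by simp only; omega))
    · rintro ⟨k, i⟩ ha
      simp only [Finset.mem_sigma, Finset.mem_range] at ha
      have hik : i ≤ k := by omega
      have hkl : k ≤ l := by omega
      simp only
      have hj : l - (l - k + i) = k - i := by omega
      have hr : l - k + i - (l - k) = i := by omega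
      rw [hj, hr]
      have hchoose : ((l+m).choose k : ℝ) * (k.choose i : ℝ)
          = ((l+m).choose (k-i) : ℝ) * ((m + (l - k + i)).choose i : ℝ) := by
        have h1 : k.choose i = k.choose (k - i) := (Nat.choose_symm hik).symm
        have h2 := Nat.choose_mul (n := l + m) (k := k) (s := k - i) (by omega)
        have h3 : l + m - (k - i) = m + (l - k + i) := by omega
        have h4 : k - (k - i) = i := by omega
        rw [h3, h4] at h2
        rw [h1]
        exact_mod_cast congrArg (Nat.cast (R := ℝ)) h2
      have hsign : (-1:ℝ)^(i+k) = (-1:ℝ)^(k-i) := by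
        have : k - i + 2 * i = i + k := by omega
        calc (-1:ℝ)^(i+k) = (-1:ℝ)^(k-i) * ((-1:ℝ)^2)^i := by
              rw [← pow_mul, ← pow_add, this]
          _ = (-1:ℝ)^(k-i) := by norm_num
      have hpow : z^i * z^(l-k) = z^(l - k + i) := by
        rw [← pow_add]; congr 1; omega
      calc ((l+n).choose (l-k) : ℝ) * ((l+m).choose k : ℝ) * ((-1:ℝ)^(i+k) * z^i * (k.choose i : ℝ)) * z^(l-k)
          = (-1:ℝ)^(i+k) * (((l+m).choose k : ℝ) * (k.choose i : ℝ)) * ((l+n).choose (l-k) : ℝ) * (z^i * z^(l-k)) := by ring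
        _ = (-1:ℝ)^(k-i) * (((l+m).choose (k-i) : ℝ) * ((m + (l - k + i)).choose i : ℝ)) * ((l+n).choose (l-k) : ℝ) * z^(l-k+i) := by
              rw [hsign, hchoose, hpow]
        _ = (-1:ℝ)^(k-i) * ((l+m).choose (k-i) : ℝ) * (((l+n).choose (l-k) : ℝ) * ((m + (l - k + i)).choose i : ℝ)) * z^(l-k+i) := by ring
  rw [step2, Finset.sum_sigma]
  refine Finset.sum_congr rfl fun j hj => ?_
  simp only [Finset.mem_range] at hj
  have : ∑ r ∈ Finset.range (j+1),
      (-1:ℝ)^(l-j) * ((l+m).choose (l-j) : ℝ) * (((l+n).choose r : ℝ) * ((m+j).choose (j-r) : ℝ)) * z^j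
      = (-1:ℝ)^(l-j) * ((l+m).choose (l-j) : ℝ) * (∑ r ∈ Finset.range (j+1), ((l+n).choose r : ℝ) * ((m+j).choose (j-r) : ℝ)) * z^j := by
    symm
    rw [Finset.mul_sum, Finset.sum_mul]
  rw [this, vandermonde_real]
  have h : l + n + (m + j) = l + n + m + j := by omega
  rw [h]

/-! ### Coefficient computation -/

lemma coeffRHS (n m l k : ℕ) (hk : k ≤ l) :
    (2 * (-1:ℝ)^l * ((m+l).factorial : ℝ)) / (Real.sqrt π * (l.factorial : ℝ) * Real.Gamma ((m:ℝ)+1/2))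
      * (poch (-(l:ℝ)) k * poch ((l:ℝ)+n+m+1) k / (poch (1/2) k * (k.factorial : ℝ))
        * (Real.Gamma ((k:ℝ)+1/2) * Real.Gamma ((m:ℝ)+1/2) / (2 * ((k+m).factorial : ℝ))))
      = (-1:ℝ)^(l-k) * ((l+m).choose (l-k) : ℝ) * ((l+n+m+k).choose k : ℝ) := by
  have hsqrt : (0:ℝ) < Real.sqrt π := Real.sqrt_pos.2 Real.pi_pos
  have hPk := poch_half_pos k
  have hPm := poch_half_pos m
  have hD : poch (-(l:ℝ)) k = (-1:ℝ)^k * ((l.factorial : ℝ) / ((l-k).factorial : ℝ)) := by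
    rw [poch_neg_nat]
    congr 1
    have h1 : l.descFactorial k * (l-k).factorial = l.factorial := by
      rw [Nat.descFactorial_eq_factorial_mul_choose]
      rw [show k.factorial * l.choose k * (l-k).factorial = l.choose k * k.factorial * (l-k).factorial by ring]
      exact Nat.choose_mul_factorial_mul_factorial hk
    have := congrArg (Nat.cast (R := ℝ)) h1
    push_cast at this
    field_simp
    linarith [this]
  have hQ : poch ((l:ℝ)+n+m+1) k = ((l+n+m+k).factorial : ℝ) / ((l+n+m).factorial : ℝ) := by
    have h := poch_nat_factorial (l+n+m) k
    have harg : ((l+n+m : ℕ) : ℝ) + 1 = (l:ℝ)+n+m+1 := by push_cast; ring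
    rw [harg] at h
    rw [← h]
    field_simp
  have hC1 : ((l+m).choose (l-k) : ℝ) * ((l-k).factorial : ℝ) * ((m+k).factorial : ℝ) = ((l+m).factorial : ℝ) := by
    have h := Nat.choose_mul_factorial_mul_factorial (n := l+m) (k := l-k) (by omega)
    rw [show l+m-(l-k) = m+k by omega] at h
    exact_mod_cast h
  have hC2 : ((l+n+m+k).choose k : ℝ) * (k.factorial : ℝ) * ((l+n+m).factorial : ℝ) = ((l+n+m+k).factorial : ℝ) := by
    have h := Nat.choose_mul_factorial_mul_factorial (n := l+n+m+k) (k := k) (by omega)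
    rw [show l+n+m+k-k = l+n+m by omega] at h
    exact_mod_cast h
  have hGk := Gamma_half_poch k
  have hGm := Gamma_half_poch m
  have hsign : ((-1:ℝ))^l = (-1:ℝ)^(l-k) * (-1:ℝ)^k := by
    rw [← pow_add]; congr 1; omega
  have hfacs : ∀ N : ℕ, ((N.factorial : ℝ)) ≠ 0 := fun N => by positivity
  rw [hD, hQ, hGk, hGm, hsign]
  rw [show (m+l).factorial = (l+m).factorial by rw [Nat.add_comm]]
  rw [show (k+m).factorial = (m+k).factorial by rw [Nat.add_comm]]
  rw [← hC1, ← hC2]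
  field_simp
  ring_nf
  rw [show ((-1:ℝ))^(k*2) = 1 by rw [mul_comm, pow_mul]; norm_num]
  ring

/-! ### Main theorem -/

theorem statement_7 (m n l : ℕ) (hnm : m ≤ n) (t : ℝ) (ht1 : 0 ≤ t) (ht2 : t ≤ 1) :
    jacobiP (n : ℝ) (m : ℝ) l (2 * t ^ 2 - 1)
      = (2 * (-1 : ℝ) ^ l * (Nat.factorial (m + l) : ℝ)) /
          (Real.sqrt π * (Nat.factorial l : ℝ) * Real.Gamma ((m : ℝ) + 1 / 2)) *
          ∫ v in (0 : ℝ)..1,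
            (1 - v ^ 2) ^ ((m : ℝ) - 1 / 2) *
              hyp2F1 l ((l : ℝ) + n + m + 1) (1 / 2) (t ^ 2 * v ^ 2) := by
  have hLHS : jacobiP (n:ℝ) (m:ℝ) l (2*t^2-1)
      = ∑ k ∈ Finset.range (l+1), ((l+n).choose (l-k) : ℝ) * ((l+m).choose k : ℝ) * (t^2-1)^k * (t^2)^(l-k) := by
    rw [jacobiP]
    refine Finset.sum_congr rfl fun k _ => ?_
    rw [show (l:ℝ) + (n:ℝ) = ((l+n : ℕ) : ℝ) by push_cast; ring,
        show (l:ℝ) + (m:ℝ) = ((l+m : ℕ) : ℝ) by push_cast; ring,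
        genBinom_nat, genBinom_nat,
        show (2*t^2-1-1)/2 = t^2-1 by ring,
        show (2*t^2-1+1)/2 = t^2 by ring]
  have hInt : ∀ v : ℝ, (1 - v^2) ^ ((m:ℝ) - 1/2) * hyp2F1 l ((l:ℝ)+n+m+1) (1/2) (t^2*v^2)
      = ∑ k ∈ Finset.range (l+1),
          (poch (-(l:ℝ)) k * poch ((l:ℝ)+n+m+1) k / (poch (1/2) k * (k.factorial : ℝ)) * t^(2*k))
            * ((1 - v^2) ^ ((m:ℝ) - 1/2) * v^(2*k)) := by
    intro v
    rw [hyp2F1, Finset.mul_sum]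
    refine Finset.sum_congr rfl fun k _ => ?_
    ring
  have h1 : (∫ v in (0:ℝ)..1, (1 - v^2) ^ ((m:ℝ) - 1/2) * hyp2F1 l ((l:ℝ)+n+m+1) (1/2) (t^2*v^2))
      = ∑ k ∈ Finset.range (l+1),
          (poch (-(l:ℝ)) k * poch ((l:ℝ)+n+m+1) k / (poch (1/2) k * (k.factorial : ℝ)) * t^(2*k))
            * (Real.Gamma ((k:ℝ) + 1/2) * Real.Gamma ((m:ℝ) + 1/2) / (2 * ((k + m).factorial : ℝ))) := by
    rw [intervalIntegral.integral_congr (g := fun v : ℝ => ∑ k ∈ Finset.range (l+1),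
          (poch (-(l:ℝ)) k * poch ((l:ℝ)+n+m+1) k / (poch (1/2) k * (k.factorial : ℝ)) * t^(2*k))
            * ((1 - v^2) ^ ((m:ℝ) - 1/2) * v^(2*k))) (fun v _ => hInt v)]
    rw [intervalIntegral.integral_finset_sum (fun k _ => (Ibeta_intervalIntegrable k m).const_mul _)]
    refine Finset.sum_congr rfl fun k _ => ?_
    rw [intervalIntegral.integral_const_mul, Ibeta k m]
  rw [hLHS, lemA n m l (t^2), h1, Finset.mul_sum]
  refine Finset.sum_congr rfl fun k hk => ?_
  have hkl : k ≤ l := by simp only [Finset.mem_range] at hk; omega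
  have hcoeff := coeffRHS n m l k hkl
  calc (-1:ℝ)^(l-k) * ((l+m).choose (l-k) : ℝ) * ((l+n+m+k).choose k : ℝ) * (t^2)^k
      = ((-1:ℝ)^(l-k) * ((l+m).choose (l-k) : ℝ) * ((l+n+m+k).choose k : ℝ)) * t^(2*k) := by
        rw [pow_mul]
    _ = ((2 * (-1:ℝ)^l * ((m+l).factorial : ℝ)) / (Real.sqrt π * (l.factorial : ℝ) * Real.Gamma ((m:ℝ)+1/2))
          * (poch (-(l:ℝ)) k * poch ((l:ℝ)+n+m+1) k / (poch (1/2) k * (k.factorial : ℝ))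
            * (Real.Gamma ((k:ℝ)+1/2) * Real.Gamma ((m:ℝ)+1/2) / (2 * ((k+m).factorial : ℝ))))) * t^(2*k) := by
        rw [hcoeff]
    _ = (2 * (-1:ℝ)^l * ((m+l).factorial : ℝ)) / (Real.sqrt π * (l.factorial : ℝ) * Real.Gamma ((m:ℝ)+1/2))
          * ((poch (-(l:ℝ)) k * poch ((l:ℝ)+n+m+1) k / (poch (1/2) k * (k.factorial : ℝ)) * t^(2*k))
            * (Real.Gamma ((k:ℝ)+1/2) * Real.Gamma ((m:ℝ)+1/2) / (2 * ((k+m).factorial : ℝ)))) := by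
        ring
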